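/- For the shearlet-type group H = { [[a^λ, t₁, t₂],[0, a^{λ−c}, 0],[0, 0, a^{λ−1}]] : a > 0, t₁, t₂ ∈ ℝ } acting on ℝ³ by the transpose action h·ξ = (hᵀ)⁻¹ξ, the orbits of the points (±1, 0, 0) are the open half-spaces {ξ ∈ ℝ³ : ±ξ₁ > 0}. -/
import Mathlib


open Matrix

/-- The shearlet-type group of case (2.e), as a set of matrices. -/
noncomputable def shearletSet (lam c : ℝ) : Set (Matrix (Fin 3) (Fin 3) ℝ) :=
  {M | ∃ a t₁ t₂ : ℝ, 0 < a ∧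
    M = !![a ^ lam, t₁, t₂;
           0, a ^ (lam - c), 0;
           0, 0, a ^ (lam - 1)]}

lemma shearlet_transpose (lam c a t₁ t₂ : ℝ) :
    (!![a ^ lam, t₁, t₂; 0, a ^ (lam - c), 0; 0, 0, a ^ (lam - 1)] : Matrix (Fin 3) (Fin 3) ℝ)ᵀ
      = !![a ^ lam, 0, 0; t₁, a ^ (lam - c), 0; t₂, 0, a ^ (lam - 1)] := by
  ext i j; fin_cases i <;> fin_cases j <;> rfl

lemma shearlet_inv (lam c a t₁ t₂ : ℝ) (ha : 0 < a) :
    ((!![a ^ lam, t₁, t₂; 0, a ^ (lam - c), 0; 0, 0, a ^ (lam - 1)] : Matrix (Fin 3) (Fin 3) ℝ)ᵀ)⁻¹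
      = !![a ^ (-lam), 0, 0;
           -t₁ * a ^ (-lam) * a ^ (c - lam), a ^ (c - lam), 0;
           -t₂ * a ^ (-lam) * a ^ (1 - lam), 0, a ^ (1 - lam)] := by
  have h1 : a ^ lam * a ^ (-lam) = 1 := by rw [← Real.rpow_add ha]; simp
  have h2 : a ^ (lam - c) * a ^ (c - lam) = 1 := by rw [← Real.rpow_add ha]; ring_nf; simp
  have h3 : a ^ (lam - 1) * a ^ (1 - lam) = 1 := by rw [← Real.rpow_add ha]; ring_nf; simp
  apply Matrix.inv_eq_right_inv
  rw [shearlet_transpose, Matrix.mul_fin_three, Matrix.one_fin_three]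
  ext i j
  fin_cases i <;> fin_cases j <;>
    simp [h1, h2, h3, Matrix.vecHead, Matrix.vecTail] <;>
    first
    | linear_combination (t₁ * a ^ (-lam)) * h2
    | linear_combination (t₂ * a ^ (-lam)) * h3
    | linear_combination (-(t₁ * a ^ (-lam))) * h2
    | linear_combination (-(t₂ * a ^ (-lam))) * h3

lemma shearlet_apply (lam c a t₁ t₂ s : ℝ) (ha : 0 < a) :
    ((!![a ^ lam, t₁, t₂; 0, a ^ (lam - c), 0; 0, 0, a ^ (lam - 1)] :
        Matrix (Fin 3) (Fin 3) ℝ)ᵀ)⁻¹ *ᵥ ![s, 0, 0]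
      = ![s * a ^ (-lam), s * (-t₁ * a ^ (-lam) * a ^ (c - lam)),
          s * (-t₂ * a ^ (-lam) * a ^ (1 - lam))] := by
  rw [shearlet_inv _ _ _ _ _ ha]
  ext i
  fin_cases i <;>
    simp [Matrix.mulVec, dotProduct, Fin.sum_univ_three] <;> ring

/-- For the shearlet-type group acting on `ℝ³` by the transpose action
`h · ξ = (hᵀ)⁻¹ ξ`, the orbits of `(±1,0,0)` are the open half-spaces `{±ξ₁ > 0}`. -/
theorem shearlet_orbits (lam c : ℝ) (hlam : lam ≠ 0) :
    ({ξ : Fin 3 → ℝ | ∃ M ∈ shearletSet lam c, (Mᵀ)⁻¹ *ᵥ ![1, 0, 0] = ξ}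
        = {ξ : Fin 3 → ℝ | 0 < ξ 0}) ∧
    ({ξ : Fin 3 → ℝ | ∃ M ∈ shearletSet lam c, (Mᵀ)⁻¹ *ᵥ ![-1, 0, 0] = ξ}
        = {ξ : Fin 3 → ℝ | ξ 0 < 0}) := by
  have hnl : -lam ≠ 0 := neg_ne_zero.mpr hlam
  constructor
  · ext ξ
    simp only [Set.mem_setOf_eq]
    constructor
    · rintro ⟨M, ⟨a, t₁, t₂, ha, rfl⟩, rfl⟩
      rw [shearlet_apply lam c a t₁ t₂ 1 ha]
      simpa using Real.rpow_pos_of_pos ha (-lam)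
    · intro hξ
      set a : ℝ := (ξ 0) ^ (-lam)⁻¹ with hadef
      have ha : 0 < a := Real.rpow_pos_of_pos hξ _
      have hal : a ^ (-lam) = ξ 0 := Real.rpow_inv_rpow hξ.le hnl
      have hb : (0:ℝ) < a ^ (c - lam) := Real.rpow_pos_of_pos ha _
      have hg : (0:ℝ) < a ^ (1 - lam) := Real.rpow_pos_of_pos ha _
      refine ⟨_, ⟨a, -ξ 1 / (a ^ (-lam) * a ^ (c - lam)),
        -ξ 2 / (a ^ (-lam) * a ^ (1 - lam)), ha, rfl⟩, ?_⟩
      rw [shearlet_apply lam c a _ _ 1 ha]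
      ext i
      fin_cases i <;> simp [hal] <;> field_simp <;> ring
  · ext ξ
    simp only [Set.mem_setOf_eq]
    constructor
    · rintro ⟨M, ⟨a, t₁, t₂, ha, rfl⟩, rfl⟩
      rw [shearlet_apply lam c a t₁ t₂ (-1) ha]
      simpa using Real.rpow_pos_of_pos ha (-lam)
    · intro hξ
      have hξ' : (0:ℝ) < -ξ 0 := by linarith
      set a : ℝ := (-ξ 0) ^ (-lam)⁻¹ with hadef
      have ha : 0 < a := Real.rpow_pos_of_pos hξ' _
      have hal : a ^ (-lam) = -ξ 0 := Real.rpow_inv_rpow hξ'.le hnl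
      have hb : (0:ℝ) < a ^ (c - lam) := Real.rpow_pos_of_pos ha _
      have hg : (0:ℝ) < a ^ (1 - lam) := Real.rpow_pos_of_pos ha _
      refine ⟨_, ⟨a, ξ 1 / (a ^ (-lam) * a ^ (c - lam)),
        ξ 2 / (a ^ (-lam) * a ^ (1 - lam)), ha, rfl⟩, ?_⟩
      rw [shearlet_apply lam c a _ _ (-1) ha]
      ext i
      fin_cases i <;> simp [hal] <;> field_simp [hξ.ne, hb.ne', hg.ne'] <;> ring
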